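/- arXiv:2409.16585 — 2 statements merged into one kernel-verified Lean document; each statement's English description precedes it below -/
import Mathlib

section
/- Let β > 0, L > 0, and let k be the largest integer strictly less than β. Suppose f : [0,1] → ℝ is k times differentiable, |f(x)| ≤ 1 for all x ∈ [0,1], and f satisfies the Hölder condition |f^{(k)}(x) - f^{(k)}(y)| ≤ L|x-y|^{β-k} for all x,y ∈ [0,1]. Then there exists a constant c depending only on β and L (not on f) such that |f^{(r)}(x)| ≤ c for all 1 ≤ r ≤ k and all x ∈ [0,1]. -/
open Set

noncomputable def Caux : ℕ → ℝ
  | 0 => 1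
  | (r+1) => 6 * 3 ^ r * Caux r

lemma Caux_pos : ∀ r, 0 < Caux r
  | 0 => one_pos
  | (r+1) => by
      have := Caux_pos r
      have h3 : (0:ℝ) < 3 ^ r := by positivity
      simp only [Caux]; positivity

lemma Caux_mono : Monotone Caux := by
  apply monotone_nat_of_le_succ
  intro r
  have h := Caux_pos r
  have h1 : (1:ℝ) ≤ 6 * 3 ^ r := by
    have : (1:ℝ) ≤ 3 ^ r := one_le_pow₀ (by norm_num)
    nlinarith
  calc Caux r = 1 * Caux r := (one_mul _).symm
    _ ≤ 6 * 3 ^ r * Caux r := by nlinarith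
    _ = Caux (r+1) := rfl

lemma small_point (k : ℕ) (f : ℝ → ℝ) (hf : ContDiffOn ℝ k f (Icc (0:ℝ) 1))
    (hb : ∀ x ∈ Icc (0:ℝ) 1, |f x| ≤ 1) :
    ∀ r : ℕ, r ≤ k → ∀ a b : ℝ, 0 ≤ a → b ≤ 1 → a < b →
      ∃ ξ ∈ Icc a b, |iteratedDerivWithin r f (Icc (0:ℝ) 1) ξ| ≤ Caux r / (b - a) ^ r := by
  have hs : UniqueDiffOn ℝ (Icc (0:ℝ) 1) := uniqueDiffOn_Icc one_pos
  intro r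
  induction r with
  | zero =>
    intro _ a b ha hb1 hab
    refine ⟨a, ⟨le_refl a, hab.le⟩, ?_⟩
    simp only [iteratedDerivWithin_zero, pow_zero, Caux]
    simpa using hb a ⟨ha, hab.le.trans hb1⟩
  | succ r ih =>
    intro hrk a b ha hb1 hab
    have hrk' : r ≤ k := Nat.le_of_succ_le hrk
    set d : ℝ := (b - a) / 3 with hd
    have hdpos : 0 < d := by simp [hd]; linarith
    obtain ⟨ξ₁, hξ₁, hgξ₁⟩ := ih hrk' a (a + d) ha (by simp [hd]; linarith) (by linarith)
    obtain ⟨ξ₂, hξ₂, hgξ₂⟩ := ih hrk' (b - d) b (by simp [hd]; linarith) hb1 (by linarith)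
    have h12 : ξ₁ < ξ₂ := by
      have h1 : ξ₁ ≤ a + d := hξ₁.2
      have h2 : b - d ≤ ξ₂ := hξ₂.1
      have : a + d < b - d := by simp [hd]; linarith
      linarith
    have hsub : Icc ξ₁ ξ₂ ⊆ Icc (0:ℝ) 1 := by
      apply Icc_subset_Icc
      · linarith [hξ₁.1]
      · linarith [hξ₂.2, hb1]
    set g := iteratedDerivWithin r f (Icc (0:ℝ) 1) with hg
    have hgdiff : DifferentiableOn ℝ g (Icc (0:ℝ) 1) := by
      apply hf.differentiableOn_iteratedDerivWithin _ hs
      exact_mod_cast Nat.lt_of_succ_le hrk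
    have hderivat : ∀ η ∈ Ioo ξ₁ ξ₂,
        HasDerivAt g (iteratedDerivWithin (r+1) f (Icc (0:ℝ) 1) η) η := by
      intro η hη
      have hη01 : η ∈ Ioo (0:ℝ) 1 := by
        constructor
        · linarith [hη.1, hξ₁.1, ha]
        · linarith [hη.2, hξ₂.2, hb1]
      have hmem : Icc (0:ℝ) 1 ∈ nhds η := Icc_mem_nhds hη01.1 hη01.2
      have hdat : DifferentiableAt ℝ g η :=
        (hgdiff η (Ioo_subset_Icc_self hη01)).differentiableAt hmem
      have heq : iteratedDerivWithin (r+1) f (Icc (0:ℝ) 1) η = deriv g η := by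
        rw [iteratedDerivWithin_succ,
          derivWithin_of_mem_nhds hmem]
      rw [heq]
      exact hdat.hasDerivAt
    have hgc : ContinuousOn g (Icc ξ₁ ξ₂) :=
      (hgdiff.continuousOn).mono hsub
    obtain ⟨η, hη, hslope⟩ := exists_hasDerivAt_eq_slope g
      (iteratedDerivWithin (r+1) f (Icc (0:ℝ) 1)) h12 hgc hderivat
    refine ⟨η, ⟨by linarith [hη.1, hξ₁.1], by linarith [hη.2, hξ₂.2]⟩, ?_⟩
    rw [hslope]
    have hgap : d ≤ ξ₂ - ξ₁ := by
      have h1 : ξ₁ ≤ a + d := hξ₁.2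
      have h2 : b - d ≤ ξ₂ := hξ₂.1
      simp only [hd] at *; linarith
    have hbd : |g ξ₂ - g ξ₁| ≤ 2 * (Caux r / d ^ r) := by
      have e1 : |g ξ₁| ≤ Caux r / d ^ r := by
        have h : a + d - a = d := by ring
        rw [h] at hgξ₁; exact hgξ₁
      have e2 : |g ξ₂| ≤ Caux r / d ^ r := by
        have h : b - (b - d) = d := by ring
        rw [h] at hgξ₂; exact hgξ₂
      calc |g ξ₂ - g ξ₁| ≤ |g ξ₂| + |g ξ₁| := abs_sub _ _
        _ ≤ 2 * (Caux r / d ^ r) := by linarith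
    rw [abs_div]
    have hgap' : 0 < ξ₂ - ξ₁ := by linarith
    rw [abs_of_pos hgap']
    have key : |g ξ₂ - g ξ₁| / (ξ₂ - ξ₁) ≤ 2 * (Caux r / d ^ r) / d := by
      apply div_le_div₀ (mul_nonneg (by norm_num)
        (div_nonneg (Caux_pos r).le (pow_nonneg hdpos.le r))) hbd hdpos hgap
    refine key.trans ?_
    have hba0 : (0:ℝ) < b - a := by linarith
    have heq : 2 * (Caux r / d ^ r) / d = Caux (r+1) / (b-a)^(r+1) := by
      show 2 * (Caux r / ((b-a)/3) ^ r) / ((b-a)/3) = 6 * 3^r * Caux r / (b-a)^(r+1)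
      rw [div_pow]
      have h1 : ((b-a):ℝ) ^ r ≠ 0 := ne_of_gt (pow_pos hba0 r)
      have h2 : ((b-a):ℝ) ^ (r+1) ≠ 0 := ne_of_gt (pow_pos hba0 (r+1))
      have h3 : ((3:ℝ)) ^ r ≠ 0 := by positivity
      field_simp
      ring
    rw [heq]

/-- Uniform boundedness of all intermediate derivatives of a β-Hölder
function on `[0,1]` that is bounded by 1. Here `k` is the largest integer strictly
less than `β`. -/
theorem stmt1 (β L : ℝ) (hβ : 0 < β) (hL : 0 < L) (k : ℕ)
    (hk₁ : (k : ℝ) < β) (hk₂ : β ≤ (k : ℝ) + 1) :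
    ∃ c : ℝ, ∀ f : ℝ → ℝ,
      ContDiffOn ℝ k f (Icc (0:ℝ) 1) →
      (∀ x ∈ Icc (0:ℝ) 1, |f x| ≤ 1) →
      (∀ x ∈ Icc (0:ℝ) 1, ∀ y ∈ Icc (0:ℝ) 1,
        |iteratedDerivWithin k f (Icc (0:ℝ) 1) x -
          iteratedDerivWithin k f (Icc (0:ℝ) 1) y| ≤ L * |x - y| ^ (β - (k : ℝ))) →
      ∀ r : ℕ, 1 ≤ r → r ≤ k → ∀ x ∈ Icc (0:ℝ) 1,
        |iteratedDerivWithin r f (Icc (0:ℝ) 1) x| ≤ c := by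
  have hs : UniqueDiffOn ℝ (Icc (0:ℝ) 1) := uniqueDiffOn_Icc one_pos
  refine ⟨(k + 1) * Caux k + L, ?_⟩
  intro f hf hb hH
  -- main claim by induction on j : bound for r = k - j
  have main : ∀ j : ℕ, j ≤ k → ∀ x ∈ Icc (0:ℝ) 1,
      |iteratedDerivWithin (k - j) f (Icc (0:ℝ) 1) x| ≤ (j + 1) * Caux k + L := by
    intro j
    induction j with
    | zero =>
      intro _ x hx
      obtain ⟨ξ, hξ, hξb⟩ := small_point k f hf hb k le_rfl 0 1 le_rfl le_rfl one_pos
      have hξ01 : ξ ∈ Icc (0:ℝ) 1 := hξ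
      have hhol := hH x hx ξ hξ01
      have habs : |x - ξ| ≤ 1 := by
        rw [abs_le]; constructor <;> [linarith [hx.1, hξ01.2]; linarith [hx.2, hξ01.1]]
      have hrpow : |x - ξ| ^ (β - (k:ℝ)) ≤ 1 :=
        Real.rpow_le_one (abs_nonneg _) habs (by linarith)
      have h2 : L * |x - ξ| ^ (β - (k:ℝ)) ≤ L := by nlinarith
      have hξb' : |iteratedDerivWithin k f (Icc (0:ℝ) 1) ξ| ≤ Caux k := by
        simpa using hξb
      simp only [Nat.sub_zero]
      have htri := abs_sub_abs_le_abs_sub (iteratedDerivWithin k f (Icc (0:ℝ) 1) x)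
        (iteratedDerivWithin k f (Icc (0:ℝ) 1) ξ)
      push_cast
      linarith
    | succ j ihj =>
      intro hjk x hx
      have hjk' : j ≤ k := Nat.le_of_succ_le hjk
      set r := k - (j + 1) with hr
      have hr1 : r + 1 = k - j := by omega
      have hrk : r < k := by omega
      obtain ⟨ξ, hξ, hξb⟩ := small_point k f hf hb r hrk.le 0 1 le_rfl le_rfl one_pos
      have hξb' : |iteratedDerivWithin r f (Icc (0:ℝ) 1) ξ| ≤ Caux r := by simpa using hξb
      have hgdiff : DifferentiableOn ℝ (iteratedDerivWithin r f (Icc (0:ℝ) 1)) (Icc (0:ℝ) 1) :=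
        by apply hf.differentiableOn_iteratedDerivWithin _ hs; exact_mod_cast hrk
      have hbound : ∀ y ∈ Icc (0:ℝ) 1,
          ‖derivWithin (iteratedDerivWithin r f (Icc (0:ℝ) 1)) (Icc (0:ℝ) 1) y‖ ≤
            (j + 1) * Caux k + L := by
        intro y hy
        have : derivWithin (iteratedDerivWithin r f (Icc (0:ℝ) 1)) (Icc (0:ℝ) 1) y =
            iteratedDerivWithin (r + 1) f (Icc (0:ℝ) 1) y :=
          (congrFun iteratedDerivWithin_succ y).symm
        rw [this, hr1]
        exact ihj hjk' y hy
      have hlip := Convex.norm_image_sub_le_of_norm_derivWithin_le hgdiff hbound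
        (convex_Icc 0 1) hξ hx
      have habs : ‖x - ξ‖ ≤ 1 := by
        rw [Real.norm_eq_abs, abs_le]
        constructor <;> [linarith [hx.1, hξ.2]; linarith [hx.2, hξ.1]]
      have hM : (0:ℝ) ≤ (j + 1) * Caux k + L := by
        have := Caux_pos k; positivity
      have hstep : |iteratedDerivWithin r f (Icc (0:ℝ) 1) x -
          iteratedDerivWithin r f (Icc (0:ℝ) 1) ξ| ≤ (j + 1) * Caux k + L := by
        calc |iteratedDerivWithin r f (Icc (0:ℝ) 1) x -
            iteratedDerivWithin r f (Icc (0:ℝ) 1) ξ| ≤ ((j + 1) * Caux k + L) * ‖x - ξ‖ := hlip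
          _ ≤ (j + 1) * Caux k + L := by nlinarith [norm_nonneg (x - ξ)]
      have hCrk : Caux r ≤ Caux k := Caux_mono hrk.le
      calc |iteratedDerivWithin r f (Icc (0:ℝ) 1) x|
          ≤ |iteratedDerivWithin r f (Icc (0:ℝ) 1) x -
              iteratedDerivWithin r f (Icc (0:ℝ) 1) ξ| +
            |iteratedDerivWithin r f (Icc (0:ℝ) 1) ξ| := by
            have := abs_sub_abs_le_abs_sub (iteratedDerivWithin r f (Icc (0:ℝ) 1) x)
              (iteratedDerivWithin r f (Icc (0:ℝ) 1) ξ)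
            linarith
        _ ≤ ((j + 1) * Caux k + L) + Caux k := by linarith
        _ ≤ ((j + 1 : ℕ) + 1) * Caux k + L := by push_cast; linarith
  intro r hr1 hrk x hx
  have := main (k - r) (by omega) x hx
  have hkr : k - (k - r) = r := by omega
  rw [hkr] at this
  refine this.trans ?_
  have hC := Caux_pos k
  have : ((k:ℝ) - r + 1) ≤ (k + 1 : ℝ) := by
    have : (r:ℝ) ≥ 1 := by exact_mod_cast hr1
    have hcast : ((k - r : ℕ) : ℝ) = (k:ℝ) - r := by
      have : r ≤ k := hrk
      push_cast [Nat.cast_sub this]; ring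
    nlinarith
  have hcast : ((k - r : ℕ) : ℝ) = (k:ℝ) - r := by
    push_cast [Nat.cast_sub hrk]; ring
  rw [hcast]
  nlinarith
end

section
/- Let β > 0, L > 0, and let k be the largest integer strictly less than β. There exists a constant C depending only on β and L such that for all functions f, g : [0,1] → ℝ with |f| ≤ 1, |g| ≤ 1, f ∈ Σ(β,L), and g ∈ Σ(β,L), the pointwise product f·g belongs to Σ(β,C), i.e. |(fg)^{(k)}(x) - (fg)^{(k)}(y)| ≤ C|x-y|^{β-k} for all x,y ∈ [0,1]. -/
open Set Finset

lemma my_recomb (n : ℕ) (A B : ℕ → ℝ) :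
    ∑ j ∈ Finset.range (n+1), (n.choose j : ℝ) * (A (j+1) * B (n-j) + A j * B (n-j+1)) =
    ∑ j ∈ Finset.range (n+2), ((n+1).choose j : ℝ) * A j * B (n+1-j) := by
  have e1 : ∑ j ∈ Finset.range (n+1), (n.choose j : ℝ) * (A (j+1) * B (n-j) + A j * B (n-j+1))
      = (∑ j ∈ Finset.range (n+1), (n.choose j : ℝ) * A (j+1) * B (n-j))
        + ∑ j ∈ Finset.range (n+1), (n.choose j : ℝ) * A j * B (n-j+1) := by
    rw [← Finset.sum_add_distrib]; apply Finset.sum_congr rfl; intro j hj; ring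
  have e2 : ∑ j ∈ Finset.range (n+1), (n.choose j : ℝ) * A j * B (n-j+1)
      = ∑ j ∈ Finset.range n, (n.choose (j+1) : ℝ) * A (j+1) * B (n-(j+1)+1)
        + (n.choose 0 : ℝ) * A 0 * B (n-0+1) := Finset.sum_range_succ' _ _
  have e3 : ∑ j ∈ Finset.range n, (n.choose (j+1) : ℝ) * A (j+1) * B (n-(j+1)+1)
      = ∑ j ∈ Finset.range n, (n.choose (j+1) : ℝ) * A (j+1) * B (n-j) := by
    apply Finset.sum_congr rfl; intro j hj
    have : n-(j+1)+1 = n-j := by have := Finset.mem_range.mp hj; omega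
    rw [this]
  have e4 : ∑ j ∈ Finset.range (n+1), (n.choose (j+1) : ℝ) * A (j+1) * B (n-j)
      = ∑ j ∈ Finset.range n, (n.choose (j+1) : ℝ) * A (j+1) * B (n-j) := by
    rw [Finset.sum_range_succ, Nat.choose_succ_self]; simp
  have e5 : ∑ j ∈ Finset.range (n+2), ((n+1).choose j : ℝ) * A j * B (n+1-j)
      = ∑ j ∈ Finset.range (n+1), ((n+1).choose (j+1) : ℝ) * A (j+1) * B (n+1-(j+1))
        + ((n+1).choose 0 : ℝ) * A 0 * B (n+1-0) := Finset.sum_range_succ' _ _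
  have e6 : ∑ j ∈ Finset.range (n+1), ((n+1).choose (j+1) : ℝ) * A (j+1) * B (n+1-(j+1))
      = ∑ j ∈ Finset.range (n+1), ((n.choose j : ℝ) * A (j+1) * B (n-j)
          + (n.choose (j+1) : ℝ) * A (j+1) * B (n-j)) := by
    apply Finset.sum_congr rfl; intro j hj
    rw [Nat.choose_succ_succ, Nat.succ_sub_succ]; push_cast; ring
  rw [e1, e2, e3, ← e4, e5, e6, Finset.sum_add_distrib]
  simp only [Nat.choose_zero_right, Nat.cast_one, one_mul, Nat.sub_zero]
  ring

lemma my_leibniz (n : ℕ) (f g : ℝ → ℝ)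
    (hf : ContDiffOn ℝ n f (Icc (0:ℝ) 1)) (hg : ContDiffOn ℝ n g (Icc (0:ℝ) 1)) :
    ∀ x ∈ Icc (0:ℝ) 1,
      iteratedDerivWithin n (fun t => f t * g t) (Icc (0:ℝ) 1) x =
        ∑ j ∈ Finset.range (n+1), (n.choose j : ℝ) *
          iteratedDerivWithin j f (Icc (0:ℝ) 1) x *
          iteratedDerivWithin (n-j) g (Icc (0:ℝ) 1) x := by
  induction n with
  | zero => intro x hx; simp [iteratedDerivWithin_zero]
  | succ n ih =>
    intro x hx
    have hs : UniqueDiffOn ℝ (Icc (0:ℝ) 1) := uniqueDiffOn_Icc one_pos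
    have hfn : ContDiffOn ℝ n f (Icc (0:ℝ) 1) := hf.of_le (by exact_mod_cast Nat.le_succ n)
    have hgn : ContDiffOn ℝ n g (Icc (0:ℝ) 1) := hg.of_le (by exact_mod_cast Nat.le_succ n)
    have hdf : ∀ j, j ≤ n → ∀ y ∈ Icc (0:ℝ) 1,
        HasDerivWithinAt (iteratedDerivWithin j f (Icc (0:ℝ) 1))
          (iteratedDerivWithin (j+1) f (Icc (0:ℝ) 1) y) (Icc (0:ℝ) 1) y := by
      intro j hj y hy
      have hd : DifferentiableWithinAt ℝ (iteratedDerivWithin j f (Icc (0:ℝ) 1))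
          (Icc (0:ℝ) 1) y :=
        hf.differentiableOn_iteratedDerivWithin (by exact_mod_cast Nat.lt_succ_of_le hj) hs y hy
      have := hd.hasDerivWithinAt
      rwa [← iteratedDerivWithin_succ] at this
    have hdg : ∀ j, j ≤ n → ∀ y ∈ Icc (0:ℝ) 1,
        HasDerivWithinAt (iteratedDerivWithin j g (Icc (0:ℝ) 1))
          (iteratedDerivWithin (j+1) g (Icc (0:ℝ) 1) y) (Icc (0:ℝ) 1) y := by
      intro j hj y hy
      have hd : DifferentiableWithinAt ℝ (iteratedDerivWithin j g (Icc (0:ℝ) 1))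
          (Icc (0:ℝ) 1) y :=
        hg.differentiableOn_iteratedDerivWithin (by exact_mod_cast Nat.lt_succ_of_le hj) hs y hy
      have := hd.hasDerivWithinAt
      rwa [← iteratedDerivWithin_succ] at this
    have hsum : HasDerivWithinAt
        (fun t => ∑ j ∈ Finset.range (n+1), (n.choose j : ℝ) *
          iteratedDerivWithin j f (Icc (0:ℝ) 1) t * iteratedDerivWithin (n-j) g (Icc (0:ℝ) 1) t)
        (∑ j ∈ Finset.range (n+1), (n.choose j : ℝ) *
          (iteratedDerivWithin (j+1) f (Icc (0:ℝ) 1) x * iteratedDerivWithin (n-j) g (Icc (0:ℝ) 1) x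
            + iteratedDerivWithin j f (Icc (0:ℝ) 1) x *
              iteratedDerivWithin (n-j+1) g (Icc (0:ℝ) 1) x))
        (Icc (0:ℝ) 1) x := by
      apply HasDerivWithinAt.fun_sum
      intro j hj
      have hj' : j ≤ n := Nat.lt_succ_iff.mp (Finset.mem_range.mp hj)
      have h1 := hdf j hj' x hx
      have h2 := hdg (n-j) (Nat.sub_le n j) x hx
      have := (h1.mul h2).const_mul ((n.choose j : ℝ))
      simpa only [Pi.mul_apply, mul_assoc] using this
    have key : iteratedDerivWithin (n+1) (fun t => f t * g t) (Icc (0:ℝ) 1) x =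
        ∑ j ∈ Finset.range (n+1), (n.choose j : ℝ) *
          (iteratedDerivWithin (j+1) f (Icc (0:ℝ) 1) x * iteratedDerivWithin (n-j) g (Icc (0:ℝ) 1) x
            + iteratedDerivWithin j f (Icc (0:ℝ) 1) x *
              iteratedDerivWithin (n-j+1) g (Icc (0:ℝ) 1) x) := by
      rw [iteratedDerivWithin_succ]
      have : derivWithin (iteratedDerivWithin n (fun t => f t * g t) (Icc (0:ℝ) 1)) (Icc (0:ℝ) 1) x
          = derivWithin (fun t => ∑ j ∈ Finset.range (n+1), (n.choose j : ℝ) *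
              iteratedDerivWithin j f (Icc (0:ℝ) 1) t *
              iteratedDerivWithin (n-j) g (Icc (0:ℝ) 1) t) (Icc (0:ℝ) 1) x :=
        derivWithin_congr (fun y hy => ih hfn hgn y hy) (ih hfn hgn x hx)
      rw [this, hsum.derivWithin (hs x hx)]
    rw [key]
    exact my_recomb n (fun j => iteratedDerivWithin j f (Icc (0:ℝ) 1) x)
      (fun j => iteratedDerivWithin j g (Icc (0:ℝ) 1) x)

lemma my_point_bound : ∀ (n : ℕ) (g : ℝ → ℝ), ContDiffOn ℝ n g (Icc (0:ℝ) 1) →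
    ∀ (d M : ℝ), 0 < d → 0 ≤ M → ∀ a : ℕ → ℝ,
    (∀ i, i < 2^n → a i ∈ Icc (0:ℝ) 1) →
    (∀ i, i + 1 < 2^n → a i + d ≤ a (i+1)) →
    (∀ i, i < 2^n → |g (a i)| ≤ M) →
    ∃ ξ ∈ Icc (0:ℝ) 1, |iteratedDerivWithin n g (Icc (0:ℝ) 1) ξ| ≤ (2/d)^n * M := by
  intro n
  induction n with
  | zero =>
    intro g hg d M hd hM a ha hgap hval
    exact ⟨a 0, ha 0 (by norm_num), by simpa [iteratedDerivWithin_zero] using hval 0 (by norm_num)⟩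
  | succ n ih =>
    intro g hg d M hd hM a ha hgap hval
    have hs : UniqueDiffOn ℝ (Icc (0:ℝ) 1) := uniqueDiffOn_Icc one_pos
    have hpow : 2^(n+1) = 2*2^n := by rw [pow_succ]; ring
    have hg1 : ContDiffOn ℝ n (derivWithin g (Icc (0:ℝ) 1)) (Icc (0:ℝ) 1) :=
      hg.derivWithin hs (by exact_mod_cast le_refl (n+1))
    have hgd : DifferentiableOn ℝ g (Icc (0:ℝ) 1) :=
      hg.differentiableOn (by simp)
    -- MVT points
    have H : ∀ i : ℕ, ∃ c : ℝ, i < 2^n →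
        c ∈ Ioo (a (2*i)) (a (2*i+1)) ∧
        deriv g c = (g (a (2*i+1)) - g (a (2*i))) / (a (2*i+1) - a (2*i)) := by
      intro i
      rcases Nat.lt_or_ge i (2^n) with hi | hi
      · have h2i : 2*i + 1 < 2^(n+1) := by
          have : 2^(n+1) = 2 * 2^n := by ring
          omega
        have hlt : a (2*i) < a (2*i+1) :=
          lt_of_lt_of_le (by linarith [hgap (2*i) h2i, hd]) (le_refl _) |>.trans_le (le_refl _)
        have hmem0 := ha (2*i) (by omega)
        have hmem1 := ha (2*i+1) (by omega)
        have hcont : ContinuousOn g (Icc (a (2*i)) (a (2*i+1))) :=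
          hg.continuousOn.mono (Icc_subset_Icc hmem0.1 hmem1.2)
        have hdiff : DifferentiableOn ℝ g (Ioo (a (2*i)) (a (2*i+1))) := by
          intro x hx
          have hx01 : x ∈ Ioo (0:ℝ) 1 := ⟨lt_of_le_of_lt hmem0.1 hx.1, lt_of_lt_of_le hx.2 hmem1.2⟩
          have hnhds : Icc (0:ℝ) 1 ∈ nhds x := Icc_mem_nhds hx01.1 hx01.2
          exact ((hgd x (Ioo_subset_Icc_self hx01)).differentiableAt hnhds).differentiableWithinAt
        obtain ⟨c, hc, hceq⟩ := exists_deriv_eq_slope g hlt hcont hdiff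
        exact ⟨c, fun _ => ⟨hc, hceq⟩⟩
      · exact ⟨0, fun h => absurd h (by omega)⟩
    choose b hb using H
    -- apply IH to derivWithin g
    have key := ih (derivWithin g (Icc (0:ℝ) 1)) hg1 d (2/d*M) hd
      (by positivity) b ?_ ?_ ?_
    · obtain ⟨ξ, hξ, hbound⟩ := key
      refine ⟨ξ, hξ, ?_⟩
      rw [iteratedDerivWithin_succ']
      calc |iteratedDerivWithin n (derivWithin g (Icc (0:ℝ) 1)) (Icc (0:ℝ) 1) ξ|
          ≤ (2/d)^n * (2/d*M) := hbound
        _ = (2/d)^(n+1) * M := by ring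
    · -- membership
      intro i hi
      obtain ⟨hc, _⟩ := hb i hi
      have hmem0 := ha (2*i) (by omega)
      have hmem1 := ha (2*i+1) (by omega)
      exact ⟨le_of_lt (lt_of_le_of_lt hmem0.1 hc.1), le_of_lt (lt_of_lt_of_le hc.2 hmem1.2)⟩
    · -- gaps
      intro i hi
      obtain ⟨hci, _⟩ := hb i (by omega)
      obtain ⟨hci1, _⟩ := hb (i+1) hi
      have hgap1 := hgap (2*i+1) (by omega)
      have : 2*(i+1) = 2*i+1+1 := by ring
      rw [this] at hci1
      linarith [hci.2, hci1.1]
    · -- values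
      intro i hi
      obtain ⟨hc, hceq⟩ := hb i hi
      have h2i : 2*i + 1 < 2^(n+1) := by omega
      have hgapi := hgap (2*i) h2i
      have hlt : a (2*i) < a (2*i+1) := by linarith
      have hx01 : b i ∈ Ioo (0:ℝ) 1 := by
        have hmem0 := ha (2*i) (by omega)
        have hmem1 := ha (2*i+1) (by omega)
        exact ⟨lt_of_le_of_lt hmem0.1 hc.1, lt_of_lt_of_le hc.2 hmem1.2⟩
      have hw : derivWithin g (Icc (0:ℝ) 1) (b i) = deriv g (b i) :=
        derivWithin_of_mem_nhds (Icc_mem_nhds hx01.1 hx01.2)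
      rw [hw, hceq]
      have hnum : |g (a (2*i+1)) - g (a (2*i))| ≤ 2*M := by
        have h1 := hval (2*i+1) (by omega)
        have h2 := hval (2*i) (by omega)
        calc |g (a (2*i+1)) - g (a (2*i))| ≤ |g (a (2*i+1))| + |g (a (2*i))| := abs_sub _ _
          _ ≤ 2*M := by linarith
      have hden : d ≤ a (2*i+1) - a (2*i) := by linarith
      rw [abs_div]
      rw [abs_of_pos (by linarith : (0:ℝ) < a (2*i+1) - a (2*i))]
      rw [div_le_iff₀ (by linarith)]
      calc |g (a (2*i+1)) - g (a (2*i))| ≤ 2*M := hnum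
        _ = (2/d*M) * d := by field_simp
        _ ≤ (2/d*M) * (a (2*i+1) - a (2*i)) := by
            apply mul_le_mul_of_nonneg_left hden (by positivity)


lemma my_deriv_bound (β L : ℝ) (hL : 0 < L) (k : ℕ)
    (hk₁ : (k : ℝ) < β) (f : ℝ → ℝ)
    (hf : ContDiffOn ℝ k f (Icc (0:ℝ) 1))
    (hb : ∀ x ∈ Icc (0:ℝ) 1, |f x| ≤ 1)
    (hHo : ∀ x ∈ Icc (0:ℝ) 1, ∀ y ∈ Icc (0:ℝ) 1,
      |iteratedDerivWithin k f (Icc (0:ℝ) 1) x -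
        iteratedDerivWithin k f (Icc (0:ℝ) 1) y| ≤ L * |x - y| ^ (β - (k : ℝ))) :
    ∀ j ≤ k, ∀ x ∈ Icc (0:ℝ) 1,
      |iteratedDerivWithin j f (Icc (0:ℝ) 1) x| ≤ ((k:ℝ)+1) * 2^((k+1)*k) + L := by
  have hs : UniqueDiffOn ℝ (Icc (0:ℝ) 1) := uniqueDiffOn_Icc one_pos
  set K0 : ℝ := 2^((k+1)*k) with hK0
  have hK0pos : (0:ℝ) < K0 := by positivity
  -- Step A: point bounds
  have stepA : ∀ j ≤ k, ∃ ξ ∈ Icc (0:ℝ) 1, |iteratedDerivWithin j f (Icc (0:ℝ) 1) ξ| ≤ K0 := by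
    intro j hj
    have hfj : ContDiffOn ℝ j f (Icc (0:ℝ) 1) := hf.of_le (by exact_mod_cast hj)
    have hd : (0:ℝ) < 1/2^j := by positivity
    have hmem : ∀ i : ℕ, i < 2^j → ((i:ℝ)/2^j) ∈ Icc (0:ℝ) 1 := by
      intro i hi
      constructor
      · positivity
      · rw [div_le_one (by positivity)]
        exact_mod_cast le_of_lt hi
    have hgap : ∀ i : ℕ, i + 1 < 2^j → ((i:ℝ)/2^j) + 1/2^j ≤ ((i+1:ℕ):ℝ)/2^j := by
      intro i _
      rw [← add_div]
      push_cast
      exact le_rfl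
    have hval : ∀ i : ℕ, i < 2^j → |f ((i:ℝ)/2^j)| ≤ 1 := fun i hi => hb _ (hmem i hi)
    obtain ⟨ξ, hξ, hbd⟩ := my_point_bound j f hfj (1/2^j) 1 hd zero_le_one
      (fun i => (i:ℝ)/2^j) hmem hgap hval
    refine ⟨ξ, hξ, hbd.trans ?_⟩
    have h1 : (2:ℝ)/(1/2^j) = 2^(j+1) := by
      rw [pow_succ]; field_simp
    have h2 : ((2:ℝ)^(j+1))^j ≤ 2^((k+1)*k) := by
      rw [← pow_mul]
      exact pow_le_pow_right₀ one_le_two (Nat.mul_le_mul (by omega) hj)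
    rw [h1, mul_one, hK0]
    exact h2
  -- step B : downward induction
  have habs1 : ∀ x ∈ Icc (0:ℝ) 1, ∀ ξ ∈ Icc (0:ℝ) 1, |x - ξ| ≤ 1 := by
    intro x hx ξ hξ
    rw [abs_le]; constructor <;> [linarith [hx.1, hξ.2]; linarith [hx.2, hξ.1]]
  have stepB : ∀ m, m ≤ k → ∀ x ∈ Icc (0:ℝ) 1,
      |iteratedDerivWithin (k-m) f (Icc (0:ℝ) 1) x| ≤ ((m:ℝ)+1) * K0 + L := by
    intro m
    induction m with
    | zero =>
      intro _ x hx
      obtain ⟨ξ, hξ, hbd⟩ := stepA k le_rfl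
      have htri : |iteratedDerivWithin k f (Icc (0:ℝ) 1) x| ≤
          |iteratedDerivWithin k f (Icc (0:ℝ) 1) x - iteratedDerivWithin k f (Icc (0:ℝ) 1) ξ|
            + |iteratedDerivWithin k f (Icc (0:ℝ) 1) ξ| := by
        calc |iteratedDerivWithin k f (Icc (0:ℝ) 1) x|
            = |(iteratedDerivWithin k f (Icc (0:ℝ) 1) x - iteratedDerivWithin k f (Icc (0:ℝ) 1) ξ)
              + iteratedDerivWithin k f (Icc (0:ℝ) 1) ξ| := by ring_nf
          _ ≤ _ := abs_add_le _ _
      have hrp : |x - ξ| ^ (β - (k:ℝ)) ≤ 1 :=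
        Real.rpow_le_one (abs_nonneg _) (habs1 x hx ξ hξ) (by linarith)
      have := hHo x hx ξ hξ
      simp only [Nat.sub_zero, Nat.cast_zero]
      calc |iteratedDerivWithin k f (Icc (0:ℝ) 1) x| ≤ L * |x - ξ| ^ (β - (k:ℝ)) + K0 := by
            linarith
        _ ≤ (0+1) * K0 + L := by nlinarith
    | succ m ih =>
      intro hm x hx
      have hmk : m ≤ k := by omega
      have hje : k - (m+1) + 1 = k - m := by omega
      set j := k - (m+1) with hj
      obtain ⟨ξ, hξ, hbd⟩ := stepA j (by omega)
      have hdiff : DifferentiableOn ℝ (iteratedDerivWithin j f (Icc (0:ℝ) 1)) (Icc (0:ℝ) 1) :=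
        hf.differentiableOn_iteratedDerivWithin (by exact_mod_cast (by omega : j < k)) hs
      have hbound : ∀ y ∈ Icc (0:ℝ) 1,
          ‖derivWithin (iteratedDerivWithin j f (Icc (0:ℝ) 1)) (Icc (0:ℝ) 1) y‖
            ≤ ((m:ℝ)+1) * K0 + L := by
        intro y hy
        rw [Real.norm_eq_abs, ← iteratedDerivWithin_succ, hje]
        exact ih hmk y hy
      have hmvt := Convex.norm_image_sub_le_of_norm_derivWithin_le hdiff hbound (convex_Icc 0 1) hξ hx
      rw [Real.norm_eq_abs, Real.norm_eq_abs] at hmvt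
      have h1 : |iteratedDerivWithin j f (Icc (0:ℝ) 1) x| ≤
          |iteratedDerivWithin j f (Icc (0:ℝ) 1) x - iteratedDerivWithin j f (Icc (0:ℝ) 1) ξ|
            + |iteratedDerivWithin j f (Icc (0:ℝ) 1) ξ| := by
        calc |iteratedDerivWithin j f (Icc (0:ℝ) 1) x|
            = |(iteratedDerivWithin j f (Icc (0:ℝ) 1) x - iteratedDerivWithin j f (Icc (0:ℝ) 1) ξ)
              + iteratedDerivWithin j f (Icc (0:ℝ) 1) ξ| := by ring_nf
          _ ≤ _ := abs_add_le _ _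
      have h2 : |x - ξ| ≤ 1 := habs1 x hx ξ hξ
      have h3 : ((m:ℝ)+1) * K0 + L ≥ 0 := by positivity
      push_cast
      nlinarith [hmvt, abs_sub_comm x ξ ▸ h2]
  intro j hj x hx
  have := stepB (k - j) (by omega) x hx
  have hjj : k - (k - j) = j := by omega
  rw [hjj] at this
  have hcast : ((k - j : ℕ):ℝ) ≤ (k:ℝ) := by exact_mod_cast Nat.sub_le k j
  nlinarith [this, hK0pos.le]

/-- The product of two functions in `Σ(β,L)` bounded by 1 belongs to
`Σ(β,C)` for a constant `C` depending only on `β` and `L`. -/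
theorem stmt2 (β L : ℝ) (hβ : 0 < β) (hL : 0 < L) (k : ℕ)
    (hk₁ : (k : ℝ) < β) (hk₂ : β ≤ (k : ℝ) + 1) :
    ∃ C : ℝ, ∀ f g : ℝ → ℝ,
      ContDiffOn ℝ k f (Icc (0:ℝ) 1) →
      ContDiffOn ℝ k g (Icc (0:ℝ) 1) →
      (∀ x ∈ Icc (0:ℝ) 1, |f x| ≤ 1) →
      (∀ x ∈ Icc (0:ℝ) 1, |g x| ≤ 1) →
      (∀ x ∈ Icc (0:ℝ) 1, ∀ y ∈ Icc (0:ℝ) 1,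
        |iteratedDerivWithin k f (Icc (0:ℝ) 1) x -
          iteratedDerivWithin k f (Icc (0:ℝ) 1) y| ≤ L * |x - y| ^ (β - (k : ℝ))) →
      (∀ x ∈ Icc (0:ℝ) 1, ∀ y ∈ Icc (0:ℝ) 1,
        |iteratedDerivWithin k g (Icc (0:ℝ) 1) x -
          iteratedDerivWithin k g (Icc (0:ℝ) 1) y| ≤ L * |x - y| ^ (β - (k : ℝ))) →
      ∀ x ∈ Icc (0:ℝ) 1, ∀ y ∈ Icc (0:ℝ) 1,
        |iteratedDerivWithin k (fun t => f t * g t) (Icc (0:ℝ) 1) x -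
          iteratedDerivWithin k (fun t => f t * g t) (Icc (0:ℝ) 1) y| ≤
            C * |x - y| ^ (β - (k : ℝ)) := by
  have hs : UniqueDiffOn ℝ (Icc (0:ℝ) 1) := uniqueDiffOn_Icc one_pos
  set B : ℝ := ((k:ℝ)+1) * 2^((k+1)*k) + L with hB
  have hBpos : 0 < B := by positivity
  refine ⟨(2:ℝ)^k * (2*B*(B+L)), ?_⟩
  intro f g hf hg hbf hbg hHf hHg x hx y hy
  have hFb : ∀ j ≤ k, ∀ z ∈ Icc (0:ℝ) 1, |iteratedDerivWithin j f (Icc (0:ℝ) 1) z| ≤ B :=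
    my_deriv_bound β L hL k hk₁ f hf hbf hHf
  have hGb : ∀ j ≤ k, ∀ z ∈ Icc (0:ℝ) 1, |iteratedDerivWithin j g (Icc (0:ℝ) 1) z| ≤ B :=
    my_deriv_bound β L hL k hk₁ g hg hbg hHg
  have habs1 : |x - y| ≤ 1 := by
    rw [abs_le]; constructor <;> [linarith [hx.1, hy.2]; linarith [hx.2, hy.1]]
  set t : ℝ := |x - y| ^ (β - (k:ℝ)) with hts
  have ht0 : 0 ≤ t := Real.rpow_nonneg (abs_nonneg _) _
  have hHolder : ∀ (F : ℝ → ℝ), ContDiffOn ℝ k F (Icc (0:ℝ) 1) →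
      (∀ j ≤ k, ∀ z ∈ Icc (0:ℝ) 1, |iteratedDerivWithin j F (Icc (0:ℝ) 1) z| ≤ B) →
      (∀ u ∈ Icc (0:ℝ) 1, ∀ v ∈ Icc (0:ℝ) 1,
        |iteratedDerivWithin k F (Icc (0:ℝ) 1) u -
          iteratedDerivWithin k F (Icc (0:ℝ) 1) v| ≤ L * |u - v| ^ (β - (k : ℝ))) →
      ∀ j ≤ k, |iteratedDerivWithin j F (Icc (0:ℝ) 1) x -
        iteratedDerivWithin j F (Icc (0:ℝ) 1) y| ≤ (B+L) * t := by
    intro F hF hFB hHF j hj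
    rcases eq_or_lt_of_le hj with rfl | hjlt
    · refine (hHF x hx y hy).trans ?_
      rw [hts]
      nlinarith [Real.rpow_nonneg (abs_nonneg (x - y)) (β - (j:ℝ))]
    · have hdiff : DifferentiableOn ℝ (iteratedDerivWithin j F (Icc (0:ℝ) 1)) (Icc (0:ℝ) 1) :=
        hF.differentiableOn_iteratedDerivWithin (by exact_mod_cast hjlt) hs
      have hbound : ∀ z ∈ Icc (0:ℝ) 1,
          ‖derivWithin (iteratedDerivWithin j F (Icc (0:ℝ) 1)) (Icc (0:ℝ) 1) z‖ ≤ B := by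
        intro z hz
        rw [Real.norm_eq_abs, ← iteratedDerivWithin_succ]
        exact hFB (j+1) (by omega) z hz
      have hmvt := Convex.norm_image_sub_le_of_norm_derivWithin_le hdiff hbound
        (convex_Icc 0 1) hy hx
      rw [Real.norm_eq_abs, Real.norm_eq_abs] at hmvt
      rcases eq_or_ne x y with rfl | hne
      · simp only [sub_self, abs_zero]
        positivity
      · have hpos : 0 < |x - y| := abs_pos.mpr (sub_ne_zero.mpr hne)
        have h1 : |x - y| ^ ((1:ℝ)) ≤ |x - y| ^ (β - (k:ℝ)) :=
          Real.rpow_le_rpow_of_exponent_ge hpos habs1 (by linarith)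
        rw [Real.rpow_one] at h1
        rw [hts]
        nlinarith [hmvt, hpos.le]
  rw [my_leibniz k f g hf hg x hx, my_leibniz k f g hf hg y hy, ← Finset.sum_sub_distrib]
  have hterm : ∀ j ∈ Finset.range (k+1),
      |(k.choose j : ℝ) * iteratedDerivWithin j f (Icc (0:ℝ) 1) x *
          iteratedDerivWithin (k-j) g (Icc (0:ℝ) 1) x -
        (k.choose j : ℝ) * iteratedDerivWithin j f (Icc (0:ℝ) 1) y *
          iteratedDerivWithin (k-j) g (Icc (0:ℝ) 1) y| ≤
      (k.choose j : ℝ) * (2*B*(B+L)*t) := by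
    intro j hj
    have hjk : j ≤ k := Nat.lt_succ_iff.mp (Finset.mem_range.mp hj)
    set a := iteratedDerivWithin j f (Icc (0:ℝ) 1) x
    set a' := iteratedDerivWithin j f (Icc (0:ℝ) 1) y
    set b := iteratedDerivWithin (k-j) g (Icc (0:ℝ) 1) x
    set b' := iteratedDerivWithin (k-j) g (Icc (0:ℝ) 1) y
    have hda : |a - a'| ≤ (B+L)*t := hHolder f hf hFb hHf j hjk
    have hdb : |b - b'| ≤ (B+L)*t := hHolder g hg hGb hHg (k-j) (Nat.sub_le k j)
    have hab : |b| ≤ B := hGb (k-j) (Nat.sub_le k j) x hx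
    have ha' : |a'| ≤ B := hFb j hjk y hy
    have key : |a*b - a'*b'| ≤ 2*B*(B+L)*t := by
      have e : a*b - a'*b' = (a - a')*b + a'*(b - b') := by ring
      rw [e]
      calc |(a - a')*b + a'*(b - b')| ≤ |(a - a')*b| + |a'*(b - b')| := abs_add_le _ _
        _ = |a - a'| * |b| + |a'| * |b - b'| := by rw [abs_mul, abs_mul]
        _ ≤ ((B+L)*t)*B + B*((B+L)*t) := by
            have h1 : |a - a'| * |b| ≤ ((B+L)*t)*B :=
              mul_le_mul hda hab (abs_nonneg _) (by positivity)
            have h2 : |a'| * |b - b'| ≤ B*((B+L)*t) :=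
              mul_le_mul ha' hdb (abs_nonneg _) hBpos.le
            linarith
        _ = 2*B*(B+L)*t := by ring
    calc |(k.choose j : ℝ) * a * b - (k.choose j : ℝ) * a' * b'|
        = (k.choose j : ℝ) * |a*b - a'*b'| := by
          have e : (k.choose j : ℝ)*a*b - (k.choose j : ℝ)*a'*b'
              = (k.choose j : ℝ)*(a*b - a'*b') := by ring
          rw [e, abs_mul, Nat.abs_cast]
      _ ≤ (k.choose j : ℝ) * (2*B*(B+L)*t) := by
          apply mul_le_mul_of_nonneg_left key (by positivity)
  calc |∑ j ∈ Finset.range (k+1),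
        ((k.choose j : ℝ) * iteratedDerivWithin j f (Icc (0:ℝ) 1) x *
            iteratedDerivWithin (k-j) g (Icc (0:ℝ) 1) x -
          (k.choose j : ℝ) * iteratedDerivWithin j f (Icc (0:ℝ) 1) y *
            iteratedDerivWithin (k-j) g (Icc (0:ℝ) 1) y)|
      ≤ ∑ j ∈ Finset.range (k+1),
        |(k.choose j : ℝ) * iteratedDerivWithin j f (Icc (0:ℝ) 1) x *
            iteratedDerivWithin (k-j) g (Icc (0:ℝ) 1) x -
          (k.choose j : ℝ) * iteratedDerivWithin j f (Icc (0:ℝ) 1) y *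
            iteratedDerivWithin (k-j) g (Icc (0:ℝ) 1) y| := Finset.abs_sum_le_sum_abs _ _
    _ ≤ ∑ j ∈ Finset.range (k+1), (k.choose j : ℝ) * (2*B*(B+L)*t) := Finset.sum_le_sum hterm
    _ = (∑ j ∈ Finset.range (k+1), (k.choose j : ℝ)) * (2*B*(B+L)*t) := by
        rw [Finset.sum_mul]
    _ = (2:ℝ)^k * (2*B*(B+L)) * t := by
        have : (∑ j ∈ Finset.range (k+1), (k.choose j : ℝ)) = (2:ℝ)^k := by
          rw [← Nat.cast_sum]
          rw [Nat.sum_range_choose]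
          push_cast; ring
        rw [this]; ring
end
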